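/- Let A = 1 − q·m, Δ₁ = A² − 4h, h₁ = m − (q+1)·m², and suppose A > 0 and Δ₁ > 0; let x₅ = (A + √Δ₁)/2. If m > A/2 and h > h₁, then x₅ < m; consequently the Jacobian matrix of F at E₅ = (x₅, m) has eigenvalues 1 − 2x₅ − q·m < 0 and s·m·(1 − m/x₅) < 0, i.e. two negative real eigenvalues. -/

import Mathlib

/-- The predator–prey vector field
    `F(x,y) = (x(1-x) - q x y - h, s y (1 - y/x)(y - m))`. -/
noncomputable def F (q s h m : ℝ) (p : ℝ × ℝ) : ℝ × ℝ :=
  (p.1 * (1 - p.1) - q * p.1 * p.2 - h, s * p.2 * (1 - p.2 / p.1) * (p.2 - m))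

/-- The continuous linear map `ℝ² → ℝ²` with matrix `[[a, b], [c, d]]`. -/
noncomputable def clm (a b c d : ℝ) : (ℝ × ℝ) →L[ℝ] (ℝ × ℝ) :=
  (a • ContinuousLinearMap.fst ℝ ℝ ℝ + b • ContinuousLinearMap.snd ℝ ℝ ℝ).prod
    (c • ContinuousLinearMap.fst ℝ ℝ ℝ + d • ContinuousLinearMap.snd ℝ ℝ ℝ)

lemma mem_spec_left (a b d : ℝ) : a ∈ spectrum ℝ (!![a,b;0,d] : Matrix (Fin 2) (Fin 2) ℝ) := by
  rw [spectrum.mem_iff]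
  intro hu
  rw [Matrix.isUnit_iff_isUnit_det] at hu
  simp [Matrix.det_fin_two, Matrix.algebraMap_eq_diagonal] at hu

lemma mem_spec_right (a b d : ℝ) : d ∈ spectrum ℝ (!![a,b;0,d] : Matrix (Fin 2) (Fin 2) ℝ) := by
  rw [spectrum.mem_iff]
  intro hu
  rw [Matrix.isUnit_iff_isUnit_det] at hu
  simp [Matrix.det_fin_two, Matrix.algebraMap_eq_diagonal] at hu


/-- With `A = 1 - q m > 0`, `Δ₁ = A² - 4h > 0`, `h₁ = m - (q+1)m²`, and
`x₅ = (A + √Δ₁)/2`: if `m > A/2` and `h > h₁` then `x₅ < m`; the Jacobian of `F` at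
`E₅ = (x₅, m)` has the two negative eigenvalues `1 - 2x₅ - q m` and `s m (1 - m/x₅)`. -/
theorem stmt10 (q s h m x5 : ℝ) (hq : 0 < q) (hs : 0 < s) (hh : 0 < h)
    (hm0 : 0 < m) (hm1 : m < 1)
    (hA : 0 < 1 - q*m) (hΔ : 0 < (1 - q*m)^2 - 4*h)
    (hx5 : x5 = (1 - q*m + Real.sqrt ((1 - q*m)^2 - 4*h))/2)
    (hcond : (1 - q*m)/2 < m ∧ m - (q+1)*m^2 < h) :
    x5 < m ∧
    HasFDerivAt (F q s h m)
      (clm (1 - 2*x5 - q*m) (-q*x5) 0 (s*m*(1 - m/x5))) ((x5, m) : ℝ × ℝ) ∧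
    (1 - 2*x5 - q*m) ∈ spectrum ℝ
      (!![1 - 2*x5 - q*m, -q*x5; 0, s*m*(1 - m/x5)] : Matrix (Fin 2) (Fin 2) ℝ) ∧
    (s*m*(1 - m/x5)) ∈ spectrum ℝ
      (!![1 - 2*x5 - q*m, -q*x5; 0, s*m*(1 - m/x5)] : Matrix (Fin 2) (Fin 2) ℝ) ∧
    1 - 2*x5 - q*m < 0 ∧ s*m*(1 - m/x5) < 0 := by
  have hsq : 0 < Real.sqrt ((1 - q*m)^2 - 4*h) := Real.sqrt_pos.mpr hΔ
  have hx5pos : 0 < x5 := by rw [hx5]; positivity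
  have hx5m : x5 < m := by
    rw [hx5]
    have h2 : Real.sqrt ((1 - q*m)^2 - 4*h) < 2*m - (1 - q*m) := by
      rw [Real.sqrt_lt' (by linarith [hcond.1])]
      nlinarith [hcond.2]
    linarith
  have heig1 : 1 - 2*x5 - q*m < 0 := by rw [hx5]; linarith
  have heig2 : s*m*(1 - m/x5) < 0 := by
    have : 1 < m / x5 := (one_lt_div hx5pos).mpr hx5m
    nlinarith [mul_pos hs hm0]
  refine ⟨hx5m, ?_, mem_spec_left _ _ _, mem_spec_right _ _ _, heig1, heig2⟩
  have hx5ne : x5 ≠ 0 := ne_of_gt hx5pos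
  have h1 : HasFDerivAt (fun p : ℝ × ℝ => p.1) (ContinuousLinearMap.fst ℝ ℝ ℝ) ((x5, m) : ℝ × ℝ) := hasFDerivAt_fst
  have h2 : HasFDerivAt (fun p : ℝ × ℝ => p.2) (ContinuousLinearMap.snd ℝ ℝ ℝ) ((x5, m) : ℝ × ℝ) := hasFDerivAt_snd
  have hg1 := (((h1.mul ((hasFDerivAt_const (1:ℝ) _).sub h1)).sub
      (((h1.const_mul q).mul h2))).sub (hasFDerivAt_const h _))
  have hg2 := (((h2.const_mul s).mul
      ((hasFDerivAt_const (1:ℝ) _).sub (h2.mul (((hasFDerivAt_inv hx5ne).comp ((x5, m) : ℝ × ℝ) h1))))).mul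
      (h2.sub (hasFDerivAt_const m _)))
  simp only [F, div_eq_mul_inv]
  convert HasFDerivAt.prodMk hg1 hg2 using 1
  · rfl
  · rfl
  · rfl
  · rfl
  refine ContinuousLinearMap.ext fun p => ?_
  obtain ⟨u, v⟩ := p
  simp only [clm, ContinuousLinearMap.prod_apply, ContinuousLinearMap.add_apply,
    ContinuousLinearMap.sub_apply, ContinuousLinearMap.smul_apply,
    ContinuousLinearMap.coe_fst', ContinuousLinearMap.coe_snd',
    ContinuousLinearMap.comp_apply, ContinuousLinearMap.smulRight_apply,
    ContinuousLinearMap.one_apply, ContinuousLinearMap.zero_apply,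
    ContinuousLinearMap.neg_apply,
    smul_eq_mul, Prod.mk.injEq, Pi.sub_apply, Pi.mul_apply, Function.comp_apply,
    ContinuousLinearMap.toSpanSingleton_apply]
  constructor <;> field_simp <;> ring
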